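/- For the type-C Dunkl operators, the product formula (∏_{j=1}^r D_j)(∏_{j=1}^r x_j) = ∏_{j=1}^r ( D_j x_j - (a/2)∑_{i<j}(σ_{ij} + s_{ij}) ) holds as operators on polynomials. -/

import Mathlib

open MvPolynomial Finset

noncomputable section

abbrev Pol (r : ℕ) : Type := MvPolynomial (Fin r) ℂ

/-- Multiplication operator by a polynomial. -/
def mulOp {r : ℕ} (p : Pol r) : Module.End ℂ (Pol r) := LinearMap.mulLeft ℂ p

/-- Partial derivative operator. -/
def pd {r : ℕ} (j : Fin r) : Module.End ℂ (Pol r) := (pderiv j).toLinearMap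

/-- The transposition operator `s_{ij}` swapping the variables `i` and `j`. -/
def swOp {r : ℕ} (i j : Fin r) : Module.End ℂ (Pol r) :=
  (rename ⇑(Equiv.swap i j) : Pol r →ₐ[ℂ] Pol r).toLinearMap

/-- The sign change operator `σ_j : x_j ↦ -x_j`. -/
def negOp {r : ℕ} (j : Fin r) : Module.End ℂ (Pol r) :=
  (aeval (fun k : Fin r => if k = j then -(X j) else X k) : Pol r →ₐ[ℂ] Pol r).toLinearMap

/-- The signed transposition operator `σ_{ij} : x_i ↦ -x_j, x_j ↦ -x_i`. -/
def sswOp {r : ℕ} (i j : Fin r) : Module.End ℂ (Pol r) :=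
  (aeval (fun k : Fin r => if k = i then -(X j) else if k = j then -(X i) else X k)
    : Pol r →ₐ[ℂ] Pol r).toLinearMap

/-- Ordered product `f 0 * f 1 * ⋯ * f (r-1)` of operators. -/
def opProd {r : ℕ} (f : Fin r → Module.End ℂ (Pol r)) : Module.End ℂ (Pol r) :=
  ((List.finRange r).map f).prod

/-- The type-C Dunkl operator
`D_j = ∂_j + ((ι-1)/2) x_j⁻¹(1-σ_j) + (a/2) ∑_{i≠j} [(x_j-x_i)⁻¹(1-s_{ij}) + (x_j+x_i)⁻¹(1-σ_{ij})]`,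
with the difference-quotient operators given as data `q0, qs, qσ` pinned down by the
specifications below. -/
def dunklC {r : ℕ} (ι a : ℂ) (q0 : Fin r → Module.End ℂ (Pol r))
    (qs qσ : Fin r → Fin r → Module.End ℂ (Pol r)) (j : Fin r) : Module.End ℂ (Pol r) :=
  pd j + ((ι - 1) / 2) • q0 j + (a / 2) • ∑ i ∈ Finset.univ.erase j, (qs i j + qσ i j)

/-- Specification: `q0 j` is division of `(1 - σ_j) f` by `x_j`. -/
def QuotLong {r : ℕ} (q0 : Fin r → Module.End ℂ (Pol r)) : Prop :=
  ∀ j : Fin r, ∀ f : Pol r, X j * q0 j f = f - negOp j f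

/-- Specification: `qs i j` is division of `(1 - s_{ij}) f` by `x_j - x_i`. -/
def QuotS {r : ℕ} (qs : Fin r → Fin r → Module.End ℂ (Pol r)) : Prop :=
  ∀ i j : Fin r, i ≠ j → ∀ f : Pol r, (X j - X i) * qs i j f = f - swOp i j f

/-- Specification: `qσ i j` is division of `(1 - σ_{ij}) f` by `x_j + x_i`. -/
def QuotSig {r : ℕ} (qσ : Fin r → Fin r → Module.End ℂ (Pol r)) : Prop :=
  ∀ i j : Fin r, i ≠ j → ∀ f : Pol r, (X j + X i) * qσ i j f = f - sswOp i j f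

variable {r : ℕ}

lemma negOp_mul (n : Fin r) (p q : Pol r) : negOp n (p * q) = negOp n p * negOp n q :=
  map_mul (aeval _ : Pol r →ₐ[ℂ] Pol r) p q

lemma swOp_mul (i n : Fin r) (p q : Pol r) : swOp i n (p * q) = swOp i n p * swOp i n q :=
  map_mul (rename _ : Pol r →ₐ[ℂ] Pol r) p q

lemma sswOp_mul (i n : Fin r) (p q : Pol r) : sswOp i n (p * q) = sswOp i n p * sswOp i n q :=
  map_mul (aeval _ : Pol r →ₐ[ℂ] Pol r) p q

lemma negOp_X_self (n : Fin r) : negOp n (X n) = -X n := by simp [negOp]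

lemma negOp_X_ne {n j : Fin r} (h : j ≠ n) : negOp n (X j) = X j := by simp [negOp, h]

lemma swOp_X_left (i n : Fin r) : swOp i n (X i) = X n := by simp [swOp]

lemma swOp_X_right (i n : Fin r) : swOp i n (X n) = X i := by simp [swOp]

lemma swOp_X_ne {i n j : Fin r} (h1 : j ≠ i) (h2 : j ≠ n) : swOp i n (X j) = X j := by
  simp [swOp, Equiv.swap_apply_of_ne_of_ne h1 h2]

lemma sswOp_X_left (i n : Fin r) : sswOp i n (X i) = -X n := by simp [sswOp]

lemma sswOp_X_right {i n : Fin r} (h : i ≠ n) : sswOp i n (X n) = -X i := by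
  simp [sswOp, (by simpa using h.symm : ¬ n = i)]

lemma sswOp_X_ne {i n j : Fin r} (h1 : j ≠ i) (h2 : j ≠ n) : sswOp i n (X j) = X j := by
  simp [sswOp, h1, h2]

lemma negOp_prod (n : Fin r) (S : Finset (Fin r)) (h : n ∉ S) :
    negOp n (∏ j ∈ S, X j) = ∏ j ∈ S, X j := by
  rw [show negOp n (∏ j ∈ S, X j) = (aeval _ : Pol r →ₐ[ℂ] Pol r) (∏ j ∈ S, X j) from rfl,
    map_prod]
  exact Finset.prod_congr rfl fun j hj => negOp_X_ne (fun e => h (e ▸ hj))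

lemma swOp_prod (i n : Fin r) (S : Finset (Fin r)) (hi : i ∉ S) (hn : n ∉ S) :
    swOp i n (∏ j ∈ S, X j) = ∏ j ∈ S, X j := by
  rw [show swOp i n (∏ j ∈ S, X j) = (rename _ : Pol r →ₐ[ℂ] Pol r) (∏ j ∈ S, X j) from rfl,
    map_prod]
  exact Finset.prod_congr rfl fun j hj =>
    swOp_X_ne (fun e => hi (e ▸ hj)) (fun e => hn (e ▸ hj))

lemma sswOp_prod (i n : Fin r) (S : Finset (Fin r)) (hi : i ∉ S) (hn : n ∉ S) :
    sswOp i n (∏ j ∈ S, X j) = ∏ j ∈ S, X j := by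
  rw [show sswOp i n (∏ j ∈ S, X j) = (aeval _ : Pol r →ₐ[ℂ] Pol r) (∏ j ∈ S, X j) from rfl,
    map_prod]
  exact Finset.prod_congr rfl fun j hj =>
    sswOp_X_ne (fun e => hi (e ▸ hj)) (fun e => hn (e ▸ hj))

lemma X_sub_X_ne_zero {i n : Fin r} (h : i ≠ n) : (X n - X i : Pol r) ≠ 0 :=
  sub_ne_zero_of_ne (fun e => h (X_injective e).symm)

lemma X_add_X_ne_zero {i n : Fin r} (h : i ≠ n) : (X n + X i : Pol r) ≠ 0 := by
  intro e
  have := congrArg (coeff (Finsupp.single n 1)) e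
  have h2 : (1 + if (Finsupp.single i 1 : Fin r →₀ ℕ) = Finsupp.single n 1 then 1 else 0 : ℂ)
      = 0 := by simpa [coeff_X'] using this
  rw [if_neg (by simp [Finsupp.single_left_inj]; exact h)] at h2
  norm_num at h2









variable {ι a : ℂ} {q0 : Fin r → Module.End ℂ (Pol r)}
  {qs qσ : Fin r → Fin r → Module.End ℂ (Pol r)}

lemma q0_comm (hq0 : QuotLong q0) (n : Fin r) (g f : Pol r) (hg : negOp n g = g) :
    q0 n (g * f) = g * q0 n f := by
  apply mul_left_cancel₀ (X_ne_zero (R := ℂ) n)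
  rw [hq0 n (g * f), negOp_mul, hg, ← mul_sub, ← hq0 n f]
  ring

lemma qs_comm (hqs : QuotS qs) {i n : Fin r} (h : i ≠ n) (g f : Pol r)
    (hg : swOp i n g = g) : qs i n (g * f) = g * qs i n f := by
  apply mul_left_cancel₀ (X_sub_X_ne_zero h)
  rw [hqs i n h (g * f), swOp_mul, hg, ← mul_sub, ← hqs i n h f]
  ring

lemma qσ_comm (hqσ : QuotSig qσ) {i n : Fin r} (h : i ≠ n) (g f : Pol r)
    (hg : sswOp i n g = g) : qσ i n (g * f) = g * qσ i n f := by
  apply mul_left_cancel₀ (X_add_X_ne_zero h)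
  rw [hqσ i n h (g * f), sswOp_mul, hg, ← mul_sub, ← hqσ i n h f]
  ring

lemma qs_cross (hqs : QuotS qs) {i n : Fin r} (h : i ≠ n) (u : Pol r) :
    qs i n (X i * u) = X i * qs i n u - swOp i n u := by
  apply mul_left_cancel₀ (X_sub_X_ne_zero h)
  rw [hqs i n h (X i * u), swOp_mul, swOp_X_left, mul_sub, ← mul_assoc,
    mul_comm (X n - X i) (X i), mul_assoc, hqs i n h u]
  ring

lemma qσ_cross (hqσ : QuotSig qσ) {i n : Fin r} (h : i ≠ n) (u : Pol r) :
    qσ i n (X i * u) = X i * qσ i n u + sswOp i n u := by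
  apply mul_left_cancel₀ (X_add_X_ne_zero h)
  rw [hqσ i n h (X i * u), sswOp_mul, sswOp_X_left, mul_add, ← mul_assoc,
    mul_comm (X n + X i) (X i), mul_assoc, hqσ i n h u]
  ring

lemma term_key (hqs : QuotS qs) (hqσ : QuotSig qσ) {i n : Fin r} (hi : i ≠ n)
    {S : Finset (Fin r)} (hn : n ∈ S) (f : Pol r) :
    qs i n ((∏ j ∈ S, X j) * f) + qσ i n ((∏ j ∈ S, X j) * f)
      = (∏ j ∈ S.erase n, X j) * (qs i n (X n * f) + qσ i n (X n * f)
          - (if i ∈ S then sswOp i n f + swOp i n f else 0)) := by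
  by_cases hiS : i ∈ S
  · rw [if_pos hiS]
    have hiE : i ∈ S.erase n := Finset.mem_erase.2 ⟨hi, hiS⟩
    set g : Pol r := ∏ j ∈ (S.erase n).erase i, X j
    have hiG : i ∉ (S.erase n).erase i := Finset.notMem_erase _ _
    have hnG : n ∉ (S.erase n).erase i := fun h => Finset.notMem_erase n S (Finset.mem_of_mem_erase h)
    have hgs : swOp i n g = g := swOp_prod i n _ hiG hnG
    have hgσ : sswOp i n g = g := sswOp_prod i n _ hiG hnG
    have hprodE : ∏ j ∈ S.erase n, X j = X i * g := (Finset.mul_prod_erase _ _ hiE).symm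
    have hprod : (∏ j ∈ S, X j) * f = g * (X i * (X n * f)) := by
      rw [← Finset.mul_prod_erase _ _ hn, hprodE]; ring
    rw [hprod, qs_comm hqs hi g _ hgs, qσ_comm hqσ hi g _ hgσ,
      qs_cross hqs hi, qσ_cross hqσ hi, swOp_mul, swOp_X_right, sswOp_mul, sswOp_X_right hi,
      hprodE]
    ring
  · rw [if_neg hiS]
    set g : Pol r := ∏ j ∈ S.erase n, X j
    have hiG : i ∉ S.erase n := fun h => hiS (Finset.mem_of_mem_erase h)
    have hnG : n ∉ S.erase n := Finset.notMem_erase _ _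
    have hgs : swOp i n g = g := swOp_prod i n _ hiG hnG
    have hgσ : sswOp i n g = g := sswOp_prod i n _ hiG hnG
    have hprod : (∏ j ∈ S, X j) * f = g * (X n * f) := by
      rw [← Finset.mul_prod_erase _ _ hn]; ring
    rw [hprod, qs_comm hqs hi g _ hgs, qσ_comm hqσ hi g _ hgσ]
    ring

lemma pd_apply (j : Fin r) (p : Pol r) : pd j p = pderiv j p := rfl

lemma dunkl_key (hq0 : QuotLong q0) (hqs : QuotS qs) (hqσ : QuotSig qσ)
    (n : Fin r) {S : Finset (Fin r)} (hn : n ∈ S) (f : Pol r) :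
    dunklC ι a q0 qs qσ n ((∏ j ∈ S, X j) * f)
      = (∏ j ∈ S.erase n, X j) * (dunklC ι a q0 qs qσ n (X n * f)
          - (a / 2) • ∑ i ∈ S.erase n, (sswOp i n f + swOp i n f)) := by
  classical
  set g : Pol r := ∏ j ∈ S.erase n, X j
  have hx : (∏ j ∈ S, X j) * f = g * (X n * f) := by
    rw [← Finset.mul_prod_erase _ _ hn]; ring
  have hpg : pderiv n g = 0 := by
    refine Finset.prod_induction _ (fun p => pderiv n p = 0) ?_ ?_ ?_
    · intro p q hp hq; rw [pderiv_mul, hp, hq]; ring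
    · simp
    · intro j hj; exact pderiv_X_of_ne (Finset.mem_erase.1 hj).1
  have hpd : pderiv n ((∏ j ∈ S, X j) * f) = g * pderiv n (X n * f) := by
    rw [hx, pderiv_mul, hpg]; ring
  have hq0' : q0 n ((∏ j ∈ S, X j) * f) = g * q0 n (X n * f) := by
    rw [hx]; exact q0_comm hq0 n _ _ (negOp_prod n _ (Finset.notMem_erase _ _))
  have hsum : ∑ i ∈ Finset.univ.erase n,
        (qs i n ((∏ j ∈ S, X j) * f) + qσ i n ((∏ j ∈ S, X j) * f))
      = g * (∑ i ∈ Finset.univ.erase n, (qs i n (X n * f) + qσ i n (X n * f))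
          - ∑ i ∈ S.erase n, (sswOp i n f + swOp i n f)) := by
    rw [Finset.sum_congr rfl
      (fun i hi => term_key hqs hqσ (Finset.mem_erase.1 hi).1 hn f)]
    rw [← Finset.mul_sum, Finset.sum_sub_distrib, Finset.sum_ite_mem]
    have hset : (Finset.univ.erase n) ∩ S = S.erase n := by
      ext x
      simp only [Finset.mem_inter, Finset.mem_erase, Finset.mem_univ, true_and]
      tauto
    rw [hset]
  simp only [dunklC, LinearMap.add_apply, LinearMap.smul_apply, LinearMap.sum_apply,
    pd_apply]
  rw [hpd, hq0', hsum]
  simp only [smul_eq_C_mul]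
  ring

lemma dunkl_key_op (hq0 : QuotLong q0) (hqs : QuotS qs) (hqσ : QuotSig qσ) (n : Fin r) :
    dunklC ι a q0 qs qσ n * mulOp (∏ j ∈ Finset.univ.filter (fun j => j ≤ n), X j)
      = mulOp (∏ j ∈ Finset.univ.filter (fun j => j < n), X j) *
        (dunklC ι a q0 qs qσ n * mulOp (X n)
          - (a / 2) • ∑ i ∈ Finset.univ.filter (fun i => i < n), (sswOp i n + swOp i n)) := by
  have hn : n ∈ Finset.univ.filter (fun j => j ≤ n) := by simp
  have herase : (Finset.univ.filter (fun j => j ≤ n)).erase n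
      = Finset.univ.filter (fun j => j < n) := by
    ext x
    simp only [Finset.mem_erase, Finset.mem_filter, Finset.mem_univ, true_and]
    rw [lt_iff_le_and_ne, and_comm]
  refine LinearMap.ext fun f => ?_
  simp only [Module.End.mul_apply, mulOp, LinearMap.mulLeft_apply, LinearMap.sub_apply,
    LinearMap.smul_apply, LinearMap.sum_apply, LinearMap.add_apply]
  rw [← herase]
  exact dunkl_key hq0 hqs hqσ n hn f

lemma main_aux (hq0 : QuotLong q0) (hqs : QuotS qs) (hqσ : QuotSig qσ) (k : ℕ) (hk : k ≤ r) :
    (((List.finRange r).take k).map (dunklC ι a q0 qs qσ)).prod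
        * mulOp (∏ j ∈ Finset.univ.filter (fun j : Fin r => (j : ℕ) < k), X j)
      = (((List.finRange r).take k).map (fun j => dunklC ι a q0 qs qσ j * mulOp (X j)
          - (a / 2) • ∑ i ∈ Finset.univ.filter (fun i => i < j), (sswOp i j + swOp i j))).prod := by
  induction k with
  | zero =>
    have h0 : Finset.univ.filter (fun j : Fin r => (j : ℕ) < 0) = ∅ := by simp
    rw [h0]
    simp only [List.take_zero, List.map_nil, List.prod_nil, Finset.prod_empty, one_mul]
    rw [Module.End.one_eq_id]
    exact LinearMap.mulLeft_one ℂ (Pol r)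
  | succ k ih =>
    have hk' : k < r := hk
    set n : Fin r := ⟨k, hk'⟩ with hndef
    have htake : (List.finRange r).take (k + 1) = (List.finRange r).take k ++ [n] := by
      rw [← List.take_concat_get' _ k (by simpa using hk')]
      congr 1
      simp [hndef]
    have hfilter1 : Finset.univ.filter (fun j : Fin r => (j : ℕ) < k + 1)
        = Finset.univ.filter (fun j => j ≤ n) := by
      ext x; simp [Fin.le_def, Nat.lt_succ_iff, hndef]
    have hfilter2 : Finset.univ.filter (fun j : Fin r => (j : ℕ) < k)
        = Finset.univ.filter (fun j => j < n) := by
      ext x; simp [Fin.lt_def, hndef]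
    rw [htake, List.map_append, List.map_append, List.prod_append, List.prod_append]
    simp only [List.map_cons, List.map_nil, List.prod_cons, List.prod_nil, mul_one]
    rw [hfilter1, mul_assoc, dunkl_key_op hq0 hqs hqσ n, ← hfilter2, ← mul_assoc,
      ih (Nat.le_of_succ_le hk)]

/-- The product formula for type-C Dunkl operators:
`(∏ⱼ Dⱼ)(∏ⱼ xⱼ) = ∏ⱼ (Dⱼ xⱼ - (a/2)∑_{i<j}(σ_{ij} + s_{ij}))`. -/
theorem dunklC_prod_formula {r : ℕ} (ι a : ℂ) (q0 : Fin r → Module.End ℂ (Pol r))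
    (qs qσ : Fin r → Fin r → Module.End ℂ (Pol r))
    (hq0 : QuotLong q0) (hqs : QuotS qs) (hqσ : QuotSig qσ) :
    opProd (dunklC ι a q0 qs qσ) * mulOp (∏ j : Fin r, X j)
      = opProd (fun j => dunklC ι a q0 qs qσ j * mulOp (X j) -
          (a / 2) • ∑ i ∈ Finset.univ.filter (fun i => i < j), (sswOp i j + swOp i j)) := by
  have htake : (List.finRange r).take r = List.finRange r := by
    apply List.take_of_length_le; simp
  have hfilter : Finset.univ.filter (fun j : Fin r => (j : ℕ) < r) = Finset.univ := by
    ext j; simp [j.isLt]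
  have h := main_aux (ι := ι) (a := a) hq0 hqs hqσ r le_rfl
  rw [htake, hfilter] at h
  unfold opProd
  exact h
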